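/- Let $A$ be the point–$k$-space incidence matrix of $\mathrm{PG}(n,q)$, $\pi$ a fixed $k$-subspace with characteristic vector $\chi_\pi$ (of the singleton set $\{\pi\}$), $\mathcal{Z}$ the set of all $k$-subspaces disjoint from $\pi$ with characteristic vector $\chi_{\mathcal{Z}}$, and $j$ the all-one vector. Then $\chi_{\mathcal{Z}} - q^{k^2+k}\binom{n-k-1}{k}_q \left( \binom{n}{k}_q^{-1} j - \chi_\pi \right) \in \ker A$. -/

import Mathlib

open Finset
open scoped Classical

/-- The Gaussian binomial coefficient `[a choose b]_q`, defined via the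
`q`-Pascal recurrence `[a+1, b+1]_q = [a, b]_q + q^(b+1) * [a, b+1]_q`. -/
def gbinom (q : ℕ) : ℕ → ℕ → ℕ
  | _, 0 => 1
  | 0, _+1 => 0
  | a+1, b+1 => gbinom q a b + q^(b+1) * gbinom q a (b+1)
open Submodule
set_option linter.unusedSectionVars false
set_option maxHeartbeats 1000000

lemma gbinom_zero (q a : ℕ) : gbinom q a 0 = 1 := by cases a <;> rfl

lemma gbinom_eq_zero (q : ℕ) : ∀ a b : ℕ, a < b → gbinom q a b = 0
  | 0, _+1, _ => rfl
  | a+1, b+1, h => by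
    rw [gbinom, gbinom_eq_zero q a b (by omega), gbinom_eq_zero q a (b+1) (by omega)]
    simp

lemma gbinom_pos (q : ℕ) (hq : 0 < q) : ∀ a b : ℕ, b ≤ a → 0 < gbinom q a b
  | _, 0, _ => by rw [gbinom_zero]; norm_num
  | a+1, b+1, h => by
    rw [gbinom]
    have := gbinom_pos q hq a b (by omega)
    omega

private lemma prod_shift (x : ℤ) (c b : ℕ) :
    ∏ i ∈ range (b+1), (x^(c+1) - x^i)
      = x^b * (∏ i ∈ range b, (x^c - x^i)) * (x^(c+1) - 1) := by
  rw [Finset.prod_range_succ']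
  congr 1
  · calc ∏ i ∈ range b, (x^(c+1) - x^(i+1)) = ∏ i ∈ range b, (x * (x^c - x^i)) := by
          refine Finset.prod_congr rfl fun i _ => by ring
      _ = x^b * ∏ i ∈ range b, (x^c - x^i) := by
          rw [Finset.prod_mul_distrib, Finset.prod_const, Finset.card_range]
  · simp

lemma gbinom_mul_int (q : ℕ) : ∀ a b : ℕ,
    (gbinom q a b : ℤ) * ∏ i ∈ range b, ((q:ℤ)^b - (q:ℤ)^i)
      = ∏ i ∈ range b, ((q:ℤ)^a - (q:ℤ)^i)
  | a, 0 => by simp [gbinom_zero]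
  | 0, b+1 => by
    rw [gbinom_eq_zero q 0 (b+1) (by omega)]
    simp only [Nat.cast_zero, zero_mul]
    symm
    exact Finset.prod_eq_zero (Finset.mem_range.mpr (Nat.succ_pos b)) (by simp)
  | a+1, b+1 => by
    have IH1 := gbinom_mul_int q a b
    have IH2 := gbinom_mul_int q a (b+1)
    rw [prod_shift] at IH2
    rw [prod_shift, prod_shift]
    rw [Finset.prod_range_succ] at IH2
    rw [gbinom]
    push_cast
    linear_combination ((q:ℤ)^b * ((q:ℤ)^(b+1) - 1)) * IH1 + (q:ℤ)^(b+1) * IH2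

lemma gbinom_mul_nat (q : ℕ) (hq : 0 < q) (a b : ℕ) :
    gbinom q a b * ∏ i ∈ range b, (q^b - q^i) = ∏ i ∈ range b, (q^a - q^i) := by
  rcases lt_or_ge a b with h | h
  · rw [gbinom_eq_zero q a b h, zero_mul,
      Finset.prod_eq_zero (Finset.mem_range.mpr h) (by simp)]
  · have key := gbinom_mul_int q a b
    have hc : ∀ c : ℕ, b ≤ c →
        ((∏ i ∈ range b, (q^c - q^i) : ℕ) : ℤ) = ∏ i ∈ range b, ((q:ℤ)^c - (q:ℤ)^i) := by
      intro c hcb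
      rw [Nat.cast_prod]
      refine Finset.prod_congr rfl fun i hi => ?_
      rw [Finset.mem_range] at hi
      rw [Nat.cast_sub (Nat.pow_le_pow_right hq (by omega))]
      push_cast; ring
    have : ((gbinom q a b * ∏ i ∈ range b, (q^b - q^i) : ℕ) : ℤ)
        = ((∏ i ∈ range b, (q^a - q^i) : ℕ) : ℤ) := by
      rw [Nat.cast_mul, hc b le_rfl, hc a h]; exact key
    exact_mod_cast this


section Counting

variable {F : Type*} [Field F] [Fintype F] {V : Type*} [AddCommGroup V] [Module F V] [Finite V]

lemma mkQ_comp_li_iff {k : ℕ} (σ : Submodule F V) (s : Fin k → V) :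
    LinearIndependent F (σ.mkQ ∘ s) ↔
      LinearIndependent F s ∧ Submodule.span F (Set.range s) ⊓ σ = ⊥ := by
  constructor
  · intro h
    refine ⟨h.of_comp σ.mkQ, ?_⟩
    rw [eq_bot_iff]
    intro x hx
    obtain ⟨hx1, hx2⟩ := Submodule.mem_inf.mp hx
    obtain ⟨c, hc⟩ := (mem_span_range_iff_exists_fun F).mp hx1
    have h1 : ∑ i, c i • (σ.mkQ ∘ s) i = 0 := by
      have he : ∑ i, c i • (σ.mkQ ∘ s) i = σ.mkQ (∑ i, c i • s i) := by
        rw [map_sum]; exact Finset.sum_congr rfl fun i _ => (LinearMap.map_smul _ _ _).symm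
      rw [he, hc, Submodule.mkQ_apply]
      exact (Submodule.Quotient.mk_eq_zero σ).mpr hx2
    have hc0 := Fintype.linearIndependent_iff.mp h c h1
    have : x = 0 := by rw [← hc]; simp [hc0]
    simp [this]
  · rintro ⟨hs, hd⟩
    rw [Fintype.linearIndependent_iff]
    intro c hc
    have hmem : (∑ i, c i • s i) ∈ σ := by
      rw [← Submodule.Quotient.mk_eq_zero σ]
      have h2 : σ.mkQ (∑ i, c i • s i) = ∑ i, c i • (σ.mkQ ∘ s) i := by
        rw [map_sum]; exact Finset.sum_congr rfl fun i _ => LinearMap.map_smul _ _ _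
      have h3 := h2.trans hc
      rwa [Submodule.mkQ_apply] at h3
    have hmem2 : (∑ i, c i • s i) ∈ Submodule.span F (Set.range s) :=
      sum_mem fun i _ => smul_mem _ _ (subset_span ⟨i, rfl⟩)
    have h0 : (∑ i, c i • s i) = 0 := by
      have := hd ▸ Submodule.mem_inf.mpr ⟨hmem2, hmem⟩
      simpa using this
    exact Fintype.linearIndependent_iff.mp hs c h0

/-- Lifting tuples along the quotient map: an equivalence. -/
noncomputable def liftEquiv (σ : Submodule F V) {k : ℕ} (P : (Fin k → V ⧸ σ) → Prop) :
    {s : Fin k → V // P (σ.mkQ ∘ s)} ≃ {t : Fin k → V ⧸ σ // P t} × (Fin k → σ) := by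
  classical
  set ρ : V ⧸ σ → V := Function.surjInv σ.mkQ_surjective with hρdef
  have hρ : ∀ x, σ.mkQ (ρ x) = x := fun x => Function.surjInv_eq _ x
  refine
  { toFun := fun s => (⟨σ.mkQ ∘ s.1, s.2⟩, fun i => ⟨s.1 i - ρ (σ.mkQ (s.1 i)), ?_⟩)
    invFun := fun p => ⟨fun i => ρ (p.1.1 i) + (p.2 i).1, ?_⟩
    left_inv := ?_
    right_inv := ?_ }
  · rw [← Submodule.Quotient.mk_eq_zero σ, ← Submodule.mkQ_apply, map_sub, hρ, sub_self]
  · have : σ.mkQ ∘ (fun i => ρ (p.1.1 i) + (p.2 i).1) = p.1.1 := by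
      funext i
      have h2 : σ.mkQ (p.2 i).1 = 0 := by
        rw [Submodule.mkQ_apply, Submodule.Quotient.mk_eq_zero]; exact (p.2 i).2
      simp [map_add, hρ, h2]
    rw [this]; exact p.1.2
  · intro s
    apply Subtype.ext
    funext i
    simp
  · rintro ⟨t, w⟩
    have key : ∀ i, σ.mkQ (ρ (t.1 i) + (w i).1) = t.1 i := by
      intro i
      have h2 : σ.mkQ (w i).1 = 0 := by
        rw [Submodule.mkQ_apply, Submodule.Quotient.mk_eq_zero]; exact (w i).2
      simp [map_add, hρ, h2]
    refine Prod.ext (Subtype.ext (funext fun i => ?_)) (funext fun i => Subtype.ext ?_)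
    · exact key i
    · simp [key i]

lemma card_lift (σ : Submodule F V) {k : ℕ} (P : (Fin k → V ⧸ σ) → Prop) :
    Nat.card {s : Fin k → V // P (σ.mkQ ∘ s)}
      = Nat.card {t : Fin k → V ⧸ σ // P t} * Fintype.card F ^ (Module.finrank F σ * k) := by
  rw [Nat.card_congr (liftEquiv σ P), Nat.card_prod, Nat.card_fun]
  congr 1
  haveI : Fintype σ := Fintype.ofFinite _
  rw [Nat.card_eq_fintype_card, Nat.card_eq_fintype_card, Fintype.card_fin,
    Module.card_eq_pow_finrank (K := F) (V := σ), pow_mul]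


lemma nat_card_sigma {ι : Type*} [Fintype ι] (f : ι → Type*) [∀ i, Finite (f i)] :
    Nat.card (Σ i, f i) = ∑ i, Nat.card (f i) := by
  letI : ∀ i, Fintype (f i) := fun i => Fintype.ofFinite _
  simp [Nat.card_eq_fintype_card]

lemma card_indep_quot (σ : Submodule F V) (k : ℕ) :
    Nat.card {s : Fin k → V // LinearIndependent F (σ.mkQ ∘ s)}
      = (∏ i ∈ range k,
          (Fintype.card F ^ Module.finrank F (V ⧸ σ) - Fintype.card F ^ i))
        * Fintype.card F ^ (Module.finrank F σ * k) := by
  haveI : Finite (V ⧸ σ) := Finite.of_surjective σ.mkQ σ.mkQ_surjective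
  rw [card_lift σ (fun t => LinearIndependent F t)]
  congr 1
  rcases le_or_gt k (Module.finrank F (V ⧸ σ)) with h | h
  · rw [card_linearIndependent h]
    exact Finset.prod_bij' (fun i _ => (i : ℕ)) (fun i hi => ⟨i, Finset.mem_range.mp hi⟩) (by simp) (by simp) (by simp) (by simp) (by simp)
  · have hE : IsEmpty {t : Fin k → V ⧸ σ // LinearIndependent F t} := by
      constructor
      rintro ⟨t, ht⟩
      have h2 := ht.fintype_card_le_finrank
      rw [Fintype.card_fin] at h2
      omega
    rw [Nat.card_of_isEmpty]
    symm
    exact Finset.prod_eq_zero (Finset.mem_range.mpr h) (by simp)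

lemma cons_li_iff {k : ℕ} (v : V) (hv : v ≠ 0) (t : Fin k → V) :
    LinearIndependent F (Fin.cons v t : Fin (k+1) → V)
      ↔ LinearIndependent F ((Submodule.span F {v}).mkQ ∘ t) := by
  rw [linearIndependent_fin_cons, mkQ_comp_li_iff]
  constructor
  · rintro ⟨h1, h2⟩
    refine ⟨h1, ?_⟩
    rw [eq_bot_iff]
    intro x hx
    obtain ⟨hx1, hx2⟩ := Submodule.mem_inf.mp hx
    obtain ⟨a, ha⟩ := Submodule.mem_span_singleton.mp hx2
    rcases eq_or_ne a 0 with rfl | h0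
    · simp [← ha]
    · exfalso
      apply h2
      have hveq : v = a⁻¹ • x := by rw [← ha, smul_smul, inv_mul_cancel₀ h0, one_smul]
      rw [hveq]
      exact Submodule.smul_mem _ _ hx1
  · rintro ⟨h1, h2⟩
    refine ⟨h1, fun hmem => ?_⟩
    have hvm : v ∈ Submodule.span F (Set.range t) ⊓ Submodule.span F {v} :=
      Submodule.mem_inf.mpr ⟨hmem, Submodule.mem_span_singleton_self v⟩
    rw [h2] at hvm
    exact hv (by simpa using hvm)

lemma card_cons {k : ℕ} (v : V) (hv : v ≠ 0) :
    Nat.card {t : Fin k → V // LinearIndependent F (Fin.cons v t : Fin (k+1) → V)}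
      = (∏ i ∈ range k,
          (Fintype.card F ^ (Module.finrank F V - 1) - Fintype.card F ^ i))
        * Fintype.card F ^ k := by
  have e : {t : Fin k → V // LinearIndependent F (Fin.cons v t : Fin (k+1) → V)}
      ≃ {t : Fin k → V // LinearIndependent F ((Submodule.span F {v}).mkQ ∘ t)} :=
    Equiv.subtypeEquivRight (fun t => cons_li_iff v hv t)
  rw [Nat.card_congr e, card_indep_quot]
  have h1 : Module.finrank F (Submodule.span F {v}) = 1 := finrank_span_singleton hv
  have h2 : Module.finrank F (V ⧸ Submodule.span F {v}) = Module.finrank F V - 1 := by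
    have h3 := Submodule.finrank_quotient_add_finrank (Submodule.span F {v})
    have h4 : 0 < Module.finrank F V := by
      have := Submodule.finrank_le (Submodule.span F {v})
      omega
    omega
  rw [h1, h2, one_mul]

end Counting

section Main

variable {F : Type*} [Field F] [Fintype F] {V : Type*} [AddCommGroup V] [Module F V] [Finite V]

lemma card_omega (σ : Submodule F V) (v : V) (hv : v ∉ σ) (k : ℕ) :
    Nat.card {W : Submodule F V // Module.finrank F W = k+1 ∧ v ∈ W ∧ W ⊓ σ = ⊥}
        * ∏ i ∈ range k, (Fintype.card F ^ k - Fintype.card F ^ i)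
      = (∏ i ∈ range k,
          (Fintype.card F ^ (Module.finrank F (V ⧸ σ) - 1) - Fintype.card F ^ i))
        * Fintype.card F ^ (Module.finrank F σ * k) := by
  haveI : Finite (V ⧸ σ) := Finite.of_surjective σ.mkQ σ.mkQ_surjective
  haveI : Finite (Submodule F V) :=
    Finite.of_injective (fun W => (W : Set V)) SetLike.coe_injective
  have hv0 : v ≠ 0 := fun h => hv (h ▸ σ.zero_mem)
  have hvq : σ.mkQ v ≠ 0 := by
    rw [Submodule.mkQ_apply, Ne, Submodule.Quotient.mk_eq_zero]
    exact hv
  set P : (Fin k → V ⧸ σ) → Prop :=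
    (fun t => LinearIndependent F (Fin.cons (σ.mkQ v) t : Fin (k+1) → V ⧸ σ)) with hP
  set X := {s : Fin k → V // P (σ.mkQ ∘ s)} with hX
  set Ω := {W : Submodule F V // Module.finrank F W = k+1 ∧ v ∈ W ∧ W ⊓ σ = ⊥} with hΩ
  haveI : Fintype Ω := Fintype.ofFinite _
  -- quotient-side count
  have hX1 : Nat.card X
      = ((∏ i ∈ range k,
          (Fintype.card F ^ (Module.finrank F (V ⧸ σ) - 1) - Fintype.card F ^ i))
        * Fintype.card F ^ k) * Fintype.card F ^ (Module.finrank F σ * k) := by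
    rw [hX, card_lift σ P, hP]
    congr 1
    exact card_cons (σ.mkQ v) hvq
  -- facts about elements of X
  have hcomp : ∀ s : Fin k → V, σ.mkQ ∘ Fin.cons v s = Fin.cons (σ.mkQ v) (σ.mkQ ∘ s) :=
    fun s => Fin.comp_cons _ _ _
  have hfacts : ∀ s : X, LinearIndependent F (Fin.cons v s.1 : Fin (k+1) → V)
      ∧ Submodule.span F (Set.range (Fin.cons v s.1)) ⊓ σ = ⊥ := by
    intro s
    refine (mkQ_comp_li_iff σ (Fin.cons v s.1)).mp ?_
    rw [hcomp s.1]
    exact s.2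
  -- the fibration map
  have hg : ∀ s : X, Module.finrank F (Submodule.span F (Set.range (Fin.cons v s.1))) = k+1
      ∧ v ∈ Submodule.span F (Set.range (Fin.cons v s.1))
      ∧ Submodule.span F (Set.range (Fin.cons v s.1)) ⊓ σ = ⊥ := by
    intro s
    refine ⟨?_, Submodule.subset_span ⟨0, Fin.cons_zero _ _⟩, (hfacts s).2⟩
    rw [finrank_span_eq_card (hfacts s).1, Fintype.card_fin]
  set g : X → Ω := fun s => ⟨Submodule.span F (Set.range (Fin.cons v s.1)), hg s⟩ with hgdef
  -- fibers of g
  have fibEquiv : ∀ W : Ω, {s : X // g s = W}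
      ≃ {t : Fin k → W.1 // LinearIndependent F
          (Fin.cons (⟨v, W.2.2.1⟩ : W.1) t : Fin (k+1) → W.1)} := by
    intro W
    refine
      { toFun := fun s => ⟨fun i => ⟨s.1.1 i, ?_⟩, ?_⟩
        invFun := fun t => ⟨⟨fun i => (t.1 i).1, ?_⟩, ?_⟩
        left_inv := ?_
        right_inv := ?_ }
    · -- membership
      have hWv : (W.1 : Submodule F V) = Submodule.span F (Set.range (Fin.cons v s.1.1)) :=
        (congrArg Subtype.val s.2).symm
      rw [hWv]
      exact Submodule.subset_span ⟨i.succ, Fin.cons_succ _ _ _⟩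
    · -- independence of restricted family
      have key : ∀ (u : Fin k → W.1), (fun i => (u i).1) = s.1.1 →
          LinearIndependent F (Fin.cons (⟨v, W.2.2.1⟩ : W.1) u : Fin (k+1) → W.1) := by
        intro u hu
        apply LinearIndependent.of_comp W.1.subtype
        have hcc : W.1.subtype ∘ Fin.cons (⟨v, W.2.2.1⟩ : W.1) u = Fin.cons v s.1.1 := by
          rw [Fin.comp_cons]
          have huu : W.1.subtype ∘ u = s.1.1 := hu
          rw [huu]
          rfl
        rw [hcc]
        exact (hfacts s.1).1
      exact key _ rfl
    · -- X membership of lowered tuple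
      show LinearIndependent F
        (Fin.cons (σ.mkQ v) (σ.mkQ ∘ fun i => (t.1 i).1) : Fin (k+1) → V ⧸ σ)
      have hc2 : Fin.cons (σ.mkQ v) (σ.mkQ ∘ fun i => (t.1 i).1)
          = σ.mkQ ∘ Fin.cons v (fun i => (t.1 i).1) := (hcomp _).symm
      rw [hc2]
      apply (mkQ_comp_li_iff σ _).mpr
      constructor
      · have hcc : Fin.cons v (fun i => (t.1 i).1)
            = W.1.subtype ∘ Fin.cons (⟨v, W.2.2.1⟩ : W.1) t.1 := by
          rw [Fin.comp_cons]
          rfl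
        rw [hcc]
        exact t.2.map' W.1.subtype (Submodule.ker_subtype _)
      · have hle : Submodule.span F (Set.range (Fin.cons v (fun i => (t.1 i).1))) ≤ W.1 := by
          rw [Submodule.span_le]
          rintro x ⟨i, rfl⟩
          induction i using Fin.cases with
          | zero => rw [Fin.cons_zero]; exact W.2.2.1
          | succ i => rw [Fin.cons_succ]; exact (t.1 i).2
        rw [eq_bot_iff]
        exact le_trans (inf_le_inf_right σ hle) W.2.2.2.le
    · -- g of lowered tuple is W
      apply Subtype.ext
      show Submodule.span F (Set.range (Fin.cons v (fun i => (t.1 i).1))) = W.1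
      have hle : Submodule.span F (Set.range (Fin.cons v (fun i => (t.1 i).1))) ≤ W.1 := by
        rw [Submodule.span_le]
        rintro x ⟨i, rfl⟩
        induction i using Fin.cases with
        | zero => rw [Fin.cons_zero]; exact W.2.2.1
        | succ i => rw [Fin.cons_succ]; exact (t.1 i).2
      apply Submodule.eq_of_le_of_finrank_eq hle
      have hindep : LinearIndependent F (Fin.cons v (fun i => (t.1 i).1) : Fin (k+1) → V) := by
        have hcc : Fin.cons v (fun i => (t.1 i).1)
            = W.1.subtype ∘ Fin.cons (⟨v, W.2.2.1⟩ : W.1) t.1 := by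
          rw [Fin.comp_cons]
          rfl
        rw [hcc]
        exact t.2.map' W.1.subtype (Submodule.ker_subtype _)
      rw [finrank_span_eq_card hindep, Fintype.card_fin, W.2.1]
    · intro s
      apply Subtype.ext
      apply Subtype.ext
      rfl
    · intro t
      apply Subtype.ext
      funext i
      apply Subtype.ext
      rfl
  -- fiber-side count
  have hX2 : Nat.card X = Nat.card Ω *
      ((∏ i ∈ range k, (Fintype.card F ^ k - Fintype.card F ^ i)) * Fintype.card F ^ k) := by
    rw [Nat.card_congr (Equiv.sigmaFiberEquiv g).symm, nat_card_sigma]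
    have hfib : ∀ W : Ω, Nat.card {s : X // g s = W}
        = (∏ i ∈ range k, (Fintype.card F ^ k - Fintype.card F ^ i)) * Fintype.card F ^ k := by
      intro W
      rw [Nat.card_congr (fibEquiv W)]
      have hW0 : (⟨v, W.2.2.1⟩ : W.1) ≠ 0 := by
        intro h
        exact hv0 (congrArg Subtype.val h)
      rw [card_cons _ hW0, W.2.1]
      simp
    rw [Finset.sum_congr rfl (fun W _ => hfib W), Finset.sum_const, Finset.card_univ,
      smul_eq_mul, Nat.card_eq_fintype_card]
  -- combine
  have hq0 : 0 < Fintype.card F := Fintype.card_pos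
  apply Nat.eq_of_mul_eq_mul_right (pow_pos hq0 k)
  calc (Nat.card Ω * ∏ i ∈ range k, (Fintype.card F ^ k - Fintype.card F ^ i))
        * Fintype.card F ^ k
      = Nat.card Ω *
        ((∏ i ∈ range k, (Fintype.card F ^ k - Fintype.card F ^ i)) * Fintype.card F ^ k) := by
        ring
    _ = ((∏ i ∈ range k,
          (Fintype.card F ^ (Module.finrank F (V ⧸ σ) - 1) - Fintype.card F ^ i))
        * Fintype.card F ^ k) * Fintype.card F ^ (Module.finrank F σ * k) := by
        rw [← hX2, hX1]
    _ = ((∏ i ∈ range k,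
          (Fintype.card F ^ (Module.finrank F (V ⧸ σ) - 1) - Fintype.card F ^ i))
        * Fintype.card F ^ (Module.finrank F σ * k)) * Fintype.card F ^ k := by
        ring

end Main

section Wrapper

variable {F : Type*} [Field F] [Fintype F] {V : Type*} [AddCommGroup V] [Module F V] [Finite V]

lemma card_subspaces (σ : Submodule F V) (v : V) (hv : v ∉ σ) (k : ℕ) :
    Nat.card {W : Submodule F V // Module.finrank F W = k+1 ∧ v ∈ W ∧ W ⊓ σ = ⊥}
      = Fintype.card F ^ (Module.finrank F σ * k)
        * gbinom (Fintype.card F) (Module.finrank F (V ⧸ σ) - 1) k := by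
  have hq1 : 1 < Fintype.card F := Fintype.one_lt_card
  have hPk : 0 < ∏ i ∈ range k, (Fintype.card F ^ k - Fintype.card F ^ i) := by
    apply Finset.prod_pos
    intro i hi
    rw [Finset.mem_range] at hi
    have := Nat.pow_lt_pow_right hq1 hi
    omega
  apply Nat.eq_of_mul_eq_mul_right hPk
  rw [card_omega σ v hv k, mul_assoc, gbinom_mul_nat (Fintype.card F) (by omega) _ k]
  ring

lemma sum_indicator_eq_card {α : Type*} [Fintype α] (Q : α → Prop) [DecidablePred Q] :
    ∑ a : α, (if Q a then (1:ℝ) else 0) = Nat.card {a : α // Q a} := by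
  rw [Finset.sum_boole, Nat.card_eq_fintype_card, Fintype.card_subtype]

end Wrapper

/-- The vector $\chi_{\mathcal Z} - q^{k^2+k}\binom{n-k-1}{k}_q(\binom{n}{k}_q^{-1} j - \chi_\pi)$
lies in the kernel of the point–$k$-space incidence matrix $A$, where $\mathcal Z$ is the
set of $k$-subspaces disjoint from a fixed $k$-subspace $\pi$. -/
theorem stmt5 (q n k : ℕ) (F : Type) [Field F] [Fintype F]
    (hq : Fintype.card F = q)
    [Fintype {W : Submodule F (Fin (n+1) → F) // Module.finrank F W = k + 1}]
    (π : {W : Submodule F (Fin (n+1) → F) // Module.finrank F W = k + 1}) :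
    ∀ p : {P : Submodule F (Fin (n+1) → F) // Module.finrank F P = 1},
      ∑ W : {W : Submodule F (Fin (n+1) → F) // Module.finrank F W = k + 1},
        (if p.1 ≤ W.1 then
          ((if W.1 ⊓ π.1 = ⊥ then (1 : ℝ) else 0)
            - (q : ℝ)^(k^2 + k) * (gbinom q (n - k - 1) k : ℝ) *
              ((gbinom q n k : ℝ)⁻¹ - (if W = π then (1 : ℝ) else 0)))
        else 0) = 0 := by
  intro p
  classical
  have hq2 : 1 < q := hq ▸ Fintype.one_lt_card
  have hVr : Module.finrank F (Fin (n+1) → F) = n + 1 := by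
    rw [Module.finrank_fintype_fun_eq_card, Fintype.card_fin]
  have hkn : k ≤ n := by
    have h1 := Submodule.finrank_le π.1
    rw [hVr, π.2] at h1
    omega
  -- generator of p
  have hpbot : p.1 ≠ ⊥ := by
    intro h
    have := p.2
    rw [h, finrank_bot F] at this
    omega
  obtain ⟨v, hvmem, hv0⟩ := (Submodule.ne_bot_iff _).mp hpbot
  have hvp : p.1 = Submodule.span F {v} := by
    refine (Submodule.eq_of_le_of_finrank_eq
      ((Submodule.span_singleton_le_iff_mem v p.1).mpr hvmem) ?_).symm
    rw [finrank_span_singleton hv0, p.2]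
  have hpW : ∀ W : Submodule F (Fin (n+1) → F), p.1 ≤ W ↔ v ∈ W := fun W => by
    rw [hvp, Submodule.span_singleton_le_iff_mem]
  -- split the summand
  have hsplit : ∀ W : {W : Submodule F (Fin (n+1) → F) // Module.finrank F W = k + 1},
      (if p.1 ≤ W.1 then
        ((if W.1 ⊓ π.1 = ⊥ then (1 : ℝ) else 0)
          - (q : ℝ)^(k^2 + k) * (gbinom q (n - k - 1) k : ℝ) *
            ((gbinom q n k : ℝ)⁻¹ - (if W = π then (1 : ℝ) else 0)))
      else 0)
      = (if p.1 ≤ W.1 ∧ W.1 ⊓ π.1 = ⊥ then (1:ℝ) else 0)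
        - (q : ℝ)^(k^2 + k) * (gbinom q (n - k - 1) k : ℝ) * (gbinom q n k : ℝ)⁻¹
            * (if p.1 ≤ W.1 then (1:ℝ) else 0)
        + (q : ℝ)^(k^2 + k) * (gbinom q (n - k - 1) k : ℝ)
            * (if p.1 ≤ W.1 ∧ W = π then (1:ℝ) else 0) := by
    intro W
    rcases eq_or_ne W π with rfl | h3
    · by_cases h1 : p.1 ≤ W.1 <;> by_cases h2 : W.1 ⊓ W.1 = ⊥ <;>
        simp [h1, h2] <;> ring
    · by_cases h1 : p.1 ≤ W.1 <;> by_cases h2 : W.1 ⊓ π.1 = ⊥ <;>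
        simp [h1, h2, h3] <;> ring
  rw [Finset.sum_congr rfl (fun W _ => hsplit W), Finset.sum_add_distrib,
    Finset.sum_sub_distrib, ← Finset.mul_sum, ← Finset.mul_sum,
    sum_indicator_eq_card, sum_indicator_eq_card]
  -- the third sum
  have hS3 : ∑ W : {W : Submodule F (Fin (n+1) → F) // Module.finrank F W = k + 1},
      (if p.1 ≤ W.1 ∧ W = π then (1:ℝ) else 0) = if p.1 ≤ π.1 then (1:ℝ) else 0 := by
    have he : ∀ W : {W : Submodule F (Fin (n+1) → F) // Module.finrank F W = k + 1},
        (if p.1 ≤ W.1 ∧ W = π then (1:ℝ) else 0)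
          = if W = π then (if p.1 ≤ π.1 then (1:ℝ) else 0) else 0 := by
      intro W
      by_cases h : W = π
      · subst h; simp
      · simp [h]
    rw [Finset.sum_congr rfl (fun W _ => he W), Finset.sum_ite_eq' Finset.univ π]
    simp
  rw [hS3]
  -- counting: through p
  have hcard1 : Nat.card {W : {W : Submodule F (Fin (n+1) → F) //
      Module.finrank F W = k + 1} // p.1 ≤ W.1} = gbinom q n k := by
    have e1 : {W : {W : Submodule F (Fin (n+1) → F) // Module.finrank F W = k + 1} // p.1 ≤ W.1}
        ≃ {W : Submodule F (Fin (n+1) → F) // Module.finrank F W = k + 1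
            ∧ v ∈ W ∧ W ⊓ (⊥ : Submodule F (Fin (n+1) → F)) = ⊥} :=
      (Equiv.subtypeEquivRight (fun W => by
          rw [hpW W.1]
          exact ⟨fun h => ⟨h, inf_bot_eq _⟩, fun h => h.1⟩)).trans
        (Equiv.subtypeSubtypeEquivSubtypeInter _ _)
    rw [Nat.card_congr e1, card_subspaces (⊥ : Submodule F (Fin (n+1) → F)) v
      (by simp [hv0]) k]
    have h2 : Module.finrank F (⊥ : Submodule F (Fin (n+1) → F)) = 0 := finrank_bot F _
    have h3 : Module.finrank F ((Fin (n+1) → F) ⧸ (⊥ : Submodule F (Fin (n+1) → F))) = n + 1 := by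
      have := Submodule.finrank_quotient_add_finrank (⊥ : Submodule F (Fin (n+1) → F))
      rw [h2, hVr] at this
      omega
    rw [h2, h3, hq]
    simp
  rw [hcard1]
  by_cases hpπ : p.1 ≤ π.1
  · -- point in π : no disjoint subspace through p
    have hzero : Nat.card {W : {W : Submodule F (Fin (n+1) → F) //
        Module.finrank F W = k + 1} // p.1 ≤ W.1 ∧ W.1 ⊓ π.1 = ⊥} = 0 := by
      have : IsEmpty {W : {W : Submodule F (Fin (n+1) → F) //
          Module.finrank F W = k + 1} // p.1 ≤ W.1 ∧ W.1 ⊓ π.1 = ⊥} := by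
        constructor
        rintro ⟨W, hle, hinf⟩
        have h1 : p.1 ≤ W.1 ⊓ π.1 := le_inf hle hpπ
        rw [hinf, le_bot_iff] at h1
        exact hpbot h1
      exact Nat.card_of_isEmpty
    rw [hzero, if_pos hpπ]
    have hGne : (gbinom q n k : ℝ) ≠ 0 := by
      have := gbinom_pos q (by omega) n k hkn
      positivity
    push_cast
    field_simp
    ring
  · -- point not in π : Segre's count
    have hvπ : v ∉ π.1 := fun h => hpπ ((hpW π.1).mpr h)
    have hcardZ : Nat.card {W : {W : Submodule F (Fin (n+1) → F) //
        Module.finrank F W = k + 1} // p.1 ≤ W.1 ∧ W.1 ⊓ π.1 = ⊥}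
        = q ^ (k^2 + k) * gbinom q (n - k - 1) k := by
      have e1 : {W : {W : Submodule F (Fin (n+1) → F) // Module.finrank F W = k + 1} //
            p.1 ≤ W.1 ∧ W.1 ⊓ π.1 = ⊥}
          ≃ {W : Submodule F (Fin (n+1) → F) // Module.finrank F W = k + 1
              ∧ v ∈ W ∧ W ⊓ π.1 = ⊥} :=
        (Equiv.subtypeEquivRight (fun W => by rw [hpW W.1])).trans
          (Equiv.subtypeSubtypeEquivSubtypeInter _ _)
      rw [Nat.card_congr e1, card_subspaces π.1 v hvπ k]
      have h2 : Module.finrank F (π.1 : Submodule F (Fin (n+1) → F)) = k + 1 := π.2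
      have h3 : Module.finrank F ((Fin (n+1) → F) ⧸ (π.1 : Submodule F (Fin (n+1) → F)))
          = n - k := by
        have := Submodule.finrank_quotient_add_finrank (π.1 : Submodule F (Fin (n+1) → F))
        rw [h2, hVr] at this
        omega
      rw [h3, hq,
        show Module.finrank F (π.1 : Submodule F (Fin (n+1) → F)) * k = k^2 + k by
          rw [h2]; ring]
    rw [hcardZ, if_neg hpπ]
    have hGne : (gbinom q n k : ℝ) ≠ 0 := by
      have := gbinom_pos q (by omega) n k hkn
      positivity
    push_cast
    field_simp
    ring
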